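/- Let d > 1 be odd and let gamma >= 0, delta be integers with d <= 2*delta <= 2(d-1). Then the Gaussian binomial coefficient [2(gamma*d+delta) choose gamma*d+delta]_{q^2} is divisible by the d-th cyclotomic polynomial Phi_d(q) in Z[q]. -/

import Mathlib

open Polynomial

/-- The Gaussian binomial coefficient `[n choose k]_q` as a polynomial in `ℤ[q]`,
defined via the `q`-Pascal recurrence `[n+1, k+1]_q = [n, k]_q + q^(k+1) [n, k+1]_q`. -/
noncomputable def qbinom : ℕ → ℕ → Polynomial ℤ
  | _, 0 => 1
  | 0, _ + 1 => 0
  | n + 1, k + 1 => qbinom n k + Polynomial.X ^ (k + 1) * qbinom n (k + 1)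

lemma qbinom_zero (n : ℕ) : qbinom n 0 = 1 := by cases n <;> rfl

lemma qbinom_eq_zero : ∀ {n k : ℕ}, n < k → qbinom n k = 0
  | 0, _ + 1, _ => rfl
  | n + 1, k + 1, h => by
    rw [qbinom, qbinom_eq_zero (by omega), qbinom_eq_zero (by omega)]
    ring

lemma qbinom_self : ∀ n : ℕ, qbinom n n = 1
  | 0 => rfl
  | n + 1 => by
    rw [qbinom, qbinom_self n, qbinom_eq_zero (by omega)]
    ring

/-- The product `∏_{i=1}^m (X^i - 1)`, i.e. `(q-1)^m` times the `q`-factorial. -/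
noncomputable def qfac (m : ℕ) : Polynomial ℤ :=
  ∏ i ∈ Finset.range m, (Polynomial.X ^ (i + 1) - 1)

lemma qfac_succ (m : ℕ) : qfac (m + 1) = qfac m * (Polynomial.X ^ (m + 1) - 1) :=
  Finset.prod_range_succ _ _

lemma qfac_ne_zero (m : ℕ) : qfac m ≠ 0 := by
  apply Finset.prod_ne_zero_iff.2
  intro i _ h
  have := congrArg (Polynomial.eval 0) h
  simp at this

lemma qbinom_mul_qfac : ∀ n k : ℕ, k ≤ n →
    qbinom n k * qfac k * qfac (n - k) = qfac n := by
  intro n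
  induction n with
  | zero => intro k hk; interval_cases k; simp [qbinom_zero, qfac]
  | succ n ih =>
    intro k hk
    match k with
    | 0 => simp [qbinom_zero, qfac]
    | k + 1 =>
      rcases eq_or_lt_of_le hk with h | h
      · have hkn : k = n := by omega
        subst hkn
        rw [qbinom_self, Nat.sub_self]
        simp [qfac]
      · have hk' : k + 1 ≤ n := by omega
        have hsub : n + 1 - (k + 1) = (n - (k + 1)) + 1 := by omega
        have hsub2 : n - k = (n - (k + 1)) + 1 := by omega
        have e1 := ih k (by omega)
        have e2 := ih (k + 1) hk'
        rw [qbinom, hsub, qfac_succ, qfac_succ]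
        have hpow : Polynomial.X ^ (k + 1) * Polynomial.X ^ (n - k) =
            (Polynomial.X : Polynomial ℤ) ^ (n + 1) := by
          rw [← pow_add]; congr 1; omega
        have hnk : n - (k + 1) + 1 = n - k := by omega
        calc (qbinom n k + Polynomial.X ^ (k + 1) * qbinom n (k + 1)) *
              (qfac k * (Polynomial.X ^ (k + 1) - 1)) *
              (qfac (n - (k + 1)) * (Polynomial.X ^ (n - (k + 1) + 1) - 1))
            = (qbinom n k * qfac k * qfac (n - k)) * (Polynomial.X ^ (k + 1) - 1) +
              Polynomial.X ^ (k + 1) *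
                ((qbinom n (k + 1) * qfac (k + 1) * qfac (n - (k + 1))) *
                  (Polynomial.X ^ (n - k) - 1)) := by
              rw [hnk, hsub2, qfac_succ, qfac_succ]; ring
          _ = qfac n * (Polynomial.X ^ (k + 1) - 1) +
              Polynomial.X ^ (k + 1) * (qfac n * (Polynomial.X ^ (n - k) - 1)) := by
              rw [e1, e2]
          _ = qfac n * (Polynomial.X ^ (k + 1) * Polynomial.X ^ (n - k) - 1) := by ring
          _ = qfac n * (Polynomial.X ^ (n + 1) - 1) := by rw [hpow]
          _ = qfac (n + 1) := (qfac_succ n).symm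

lemma qbinom_ne_zero {n k : ℕ} (hk : k ≤ n) : qbinom n k ≠ 0 := by
  intro h
  have := qbinom_mul_qfac n k hk
  rw [h, zero_mul, zero_mul] at this
  exact qfac_ne_zero n this.symm

theorem stmt_19 (d γ δ : ℕ) (hd : 1 < d) (hodd : Odd d)
    (h1 : d ≤ 2 * δ) (h2 : δ ≤ d - 1) :
    Polynomial.cyclotomic d ℤ ∣
      (qbinom (2 * (γ * d + δ)) (γ * d + δ)).comp (Polynomial.X ^ 2) := by
  have hd0 : d ≠ 0 := by omega
  set j := γ * d + δ with hj
  set B := qbinom (2 * j) j with hB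
  -- Step 1: cyclotomic d ℤ ∣ B
  have hBdvd : Polynomial.cyclotomic d ℤ ∣ B := by
    obtain ⟨ζ, hζ⟩ : ∃ ζ : ℂ, IsPrimitiveRoot ζ d := ⟨_, Complex.isPrimitiveRoot_exp d hd0⟩
    set φ : ℤ →+* ℂ := Int.castRingHom ℂ
    have hφinj : Function.Injective φ := Int.cast_injective
    -- root multiplicity of each factor
    have hfac : ∀ s : ℕ, Polynomial.rootMultiplicity ζ
        ((Polynomial.X : Polynomial ℂ) ^ (s + 1) - 1) = if d ∣ (s + 1) then 1 else 0 := by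
      intro s
      have hne : ((Polynomial.X : Polynomial ℂ) ^ (s + 1) - 1) ≠ 0 := by
        intro h
        have := congrArg (Polynomial.eval 0) h
        simp at this
      by_cases hdvd : d ∣ (s + 1)
      · rw [if_pos hdvd]
        have hroot : Polynomial.IsRoot ((Polynomial.X : Polynomial ℂ) ^ (s + 1) - 1) ζ := by
          simp [Polynomial.IsRoot, (hζ.pow_eq_one_iff_dvd (s + 1)).2 hdvd]
        have hpos : 0 < Polynomial.rootMultiplicity ζ
            ((Polynomial.X : Polynomial ℂ) ^ (s + 1) - 1) :=
          (Polynomial.rootMultiplicity_pos hne).2 hroot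
        have hsep : ((Polynomial.X : Polynomial ℂ) ^ (s + 1) - 1).Separable := by
          have := Polynomial.separable_X_pow_sub_C (F := ℂ) (n := s + 1) 1
            (Nat.cast_ne_zero.2 (Nat.succ_ne_zero s)) one_ne_zero
          simpa using this
        have hle := Polynomial.rootMultiplicity_le_one_of_separable hsep ζ
        omega
      · rw [if_neg hdvd]
        apply Polynomial.rootMultiplicity_eq_zero
        simp only [Polynomial.IsRoot, Polynomial.eval_sub, Polynomial.eval_pow,
          Polynomial.eval_X, Polynomial.eval_one, sub_eq_zero]
        intro h
        exact hdvd ((hζ.pow_eq_one_iff_dvd (s + 1)).1 h)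
      -- root multiplicity of qfac
    have hqfac : ∀ m : ℕ, Polynomial.rootMultiplicity ζ ((qfac m).map φ) = m / d := by
      intro m
      induction m with
      | zero => simp [qfac]
      | succ m ih =>
        rw [qfac_succ, Polynomial.map_mul]
        have hne1 : (qfac m).map φ ≠ 0 := (Polynomial.map_ne_zero_iff hφinj).2 (qfac_ne_zero m)
        have hmap : ((Polynomial.X : Polynomial ℤ) ^ (m + 1) - 1).map φ =
            (Polynomial.X : Polynomial ℂ) ^ (m + 1) - 1 := by
          simp
        have hne2 : ((Polynomial.X : Polynomial ℤ) ^ (m + 1) - 1).map φ ≠ 0 := by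
          rw [hmap]
          intro h
          have := congrArg (Polynomial.eval 0) h
          simp at this
        rw [Polynomial.rootMultiplicity_mul (mul_ne_zero hne1 hne2), ih, hmap, hfac m,
          Nat.succ_div]
    -- quotients
    obtain ⟨e, he⟩ : ∃ e, 2 * δ = d + e := ⟨2 * δ - d, by omega⟩
    have hq2j : (2 * j) / d = 2 * γ + 1 := by
      rw [show 2 * j = e + d * (2 * γ + 1) by rw [hj, Nat.mul_add, he]; ring,
        Nat.add_mul_div_left _ _ (by omega : 0 < d), Nat.div_eq_of_lt (by omega : e < d),
        Nat.zero_add]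
    have hqj : j / d = γ := by
      rw [show j = δ + d * γ by rw [hj]; ring,
        Nat.add_mul_div_left _ _ (by omega : 0 < d), Nat.div_eq_of_lt (by omega : δ < d),
        Nat.zero_add]
    -- multiplicity of ζ in B is 1
    have hkey := congrArg (Polynomial.map φ) (qbinom_mul_qfac (2 * j) j (by omega))
    rw [show 2 * j - j = j by omega, Polynomial.map_mul, Polynomial.map_mul] at hkey
    have hBne : B.map φ ≠ 0 :=
      (Polynomial.map_ne_zero_iff hφinj).2 (qbinom_ne_zero (by omega))
    have hFjne : (qfac j).map φ ≠ 0 := (Polynomial.map_ne_zero_iff hφinj).2 (qfac_ne_zero j)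
    have hmult : Polynomial.rootMultiplicity ζ (B.map φ) = 1 := by
      have h2j := hqfac (2 * j)
      rw [← hkey, Polynomial.rootMultiplicity_mul
          (mul_ne_zero (mul_ne_zero hBne hFjne) hFjne),
        Polynomial.rootMultiplicity_mul (mul_ne_zero hBne hFjne), hqfac j,
        hq2j, hqj] at h2j
      omega
    have hroot : Polynomial.IsRoot (B.map φ) ζ :=
      (Polynomial.rootMultiplicity_pos hBne).1 (by omega)
    -- conclude divisibility via the minimal polynomial
    have haev : Polynomial.aeval ζ (B.map (Int.castRingHom ℚ)) = 0 := by
      have : Polynomial.aeval ζ B = 0 := by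
        rw [Polynomial.aeval_def, ← Polynomial.eval_map, algebraMap_int_eq]
        exact hroot
      rwa [show (Int.castRingHom ℚ) = algebraMap ℤ ℚ from rfl,
        Polynomial.aeval_map_algebraMap]
    have hmin : Polynomial.cyclotomic d ℚ ∣ B.map (Int.castRingHom ℚ) := by
      rw [Polynomial.cyclotomic_eq_minpoly_rat hζ (by omega)]
      exact minpoly.dvd ℚ ζ haev
    rw [← Polynomial.map_cyclotomic d (Int.castRingHom ℚ),
      Polynomial.map_dvd_map _ Int.cast_injective (Polynomial.cyclotomic.monic d ℤ)] at hmin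
    exact hmin
  -- Step 2: pass to the composition with X^2
  have hexp : Polynomial.cyclotomic d ℤ ∣ Polynomial.expand ℤ 2 (Polynomial.cyclotomic d ℤ) := by
    rw [Polynomial.cyclotomic_expand_eq_cyclotomic_mul Nat.prime_two
      (Nat.two_dvd_ne_zero.2 (Nat.odd_iff.1 hodd))]
    exact dvd_mul_left _ _
  have hcomp : (qbinom (2 * j) j).comp (Polynomial.X ^ 2) = Polynomial.expand ℤ 2 B := by
    rw [Polynomial.expand_eq_comp_X_pow]
  rw [hcomp]
  exact hexp.trans (map_dvd (Polynomial.expand ℤ 2) (a := Polynomial.cyclotomic d ℤ) (b := B) hBdvd)
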